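/- For any coupling π of probability measures μ, ν on ℝ with quantile functions F_μ⁻¹, F_ν⁻¹, the comonotone coupling lower bound holds: ∫ |x − y|² dπ(x,y) ≥ ∫₀¹ (F_μ⁻¹(u) − F_ν⁻¹(u))² du. -/

import Mathlib

open MeasureTheory Set

/-- The CDF of a measure on `ℝ`. -/
noncomputable def cdfOf (μ : Measure ℝ) : ℝ → ℝ := fun x => (μ (Set.Iic x)).toReal

/-- The quantile function (left-continuous generalized inverse CDF) of a measure
on `ℝ`. -/
noncomputable def quantile (μ : Measure ℝ) : ℝ → ℝ :=
  fun v => sInf {x : ℝ | v ≤ cdfOf μ x}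

/-- For any coupling `π` of Borel probability measures `μ, ν` on `ℝ` with finite
second moments, the comonotone coupling lower bound holds:
`∫ |x - y|² dπ ≥ ∫₀¹ (F_μ⁻¹(u) - F_ν⁻¹(u))² du`. -/
lemma cdfOf_eq (μ : Measure ℝ) [IsProbabilityMeasure μ] :
    cdfOf μ = ProbabilityTheory.cdf μ := by
  ext x; rw [ProbabilityTheory.cdf_eq_real]; rfl

lemma quantile_le_iff (μ : Measure ℝ) [IsProbabilityMeasure μ] {u : ℝ}
    (hu : u ∈ Set.Ioo (0:ℝ) 1) (x : ℝ) :
    quantile μ u ≤ x ↔ u ≤ cdfOf μ x := by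
  have hcd := cdfOf_eq μ
  set F := ProbabilityTheory.cdf μ with hF
  have hmono : Monotone F := ProbabilityTheory.monotone_cdf μ
  have hS : {x : ℝ | u ≤ cdfOf μ x} = {x : ℝ | u ≤ F x} := by rw [hcd]
  have hne : {x : ℝ | u ≤ F x}.Nonempty := by
    obtain ⟨x, hx⟩ :=
      ((ProbabilityTheory.tendsto_cdf_atTop μ).eventually (eventually_ge_nhds hu.2)).exists
    exact ⟨x, hx⟩
  have hbdd : BddBelow {x : ℝ | u ≤ F x} := by
    obtain ⟨x₀, hx₀⟩ :=
      ((ProbabilityTheory.tendsto_cdf_atBot μ).eventually (eventually_lt_nhds hu.1)).exists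
    refine ⟨x₀, fun y hy => ?_⟩
    by_contra h
    exact absurd (hy.trans (hmono (le_of_not_ge h))) (not_le.2 hx₀)
  have hq : quantile μ u = sInf {x : ℝ | u ≤ F x} := by rw [quantile, hS]
  -- the infimum belongs to the set
  have hmem : u ≤ F (sInf {x : ℝ | u ≤ F x}) := by
    set q := sInf {x : ℝ | u ≤ F x} with hqdef
    have h1 : ∀ y ∈ Ioi q, u ≤ F y := by
      intro y hy
      obtain ⟨z, hz, hzy⟩ := (csInf_lt_iff hbdd hne).1 hy
      exact hz.trans (hmono hzy.le)
    have h2 : Filter.Tendsto F (nhdsWithin q (Ioi q)) (nhds (F q)) :=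
      (F.right_continuous q).tendsto.mono_left (nhdsWithin_mono q Ioi_subset_Ici_self)
    exact ge_of_tendsto h2 (eventually_nhdsWithin_of_forall h1)
  rw [hcd]
  constructor
  · intro h
    rw [hq] at h
    exact hmem.trans (hmono h)
  · intro h
    rw [hq]
    exact csInf_le hbdd h

lemma quantile_monotoneOn (μ : Measure ℝ) [IsProbabilityMeasure μ] :
    MonotoneOn (quantile μ) (Set.Ioo (0:ℝ) 1) := by
  intro u hu v hv huv
  have h : v ≤ cdfOf μ (quantile μ v) := (quantile_le_iff μ hv _).1 le_rfl
  exact (quantile_le_iff μ hu _).2 (huv.trans h)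

lemma quantile_aemeasurable (μ : Measure ℝ) [IsProbabilityMeasure μ] :
    AEMeasurable (quantile μ) (volume.restrict (Set.Ioo (0:ℝ) 1)) :=
  aemeasurable_restrict_of_monotoneOn measurableSet_Ioo (quantile_monotoneOn μ)

lemma quantile_map (μ : Measure ℝ) [IsProbabilityMeasure μ] :
    Measure.map (quantile μ) (volume.restrict (Set.Ioo (0:ℝ) 1)) = μ := by
  have h01 : IsProbabilityMeasure (volume.restrict (Set.Ioo (0:ℝ) 1)) := by
    constructor; simp [Real.volume_Ioo]
  have hmap : IsProbabilityMeasure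
      (Measure.map (quantile μ) (volume.restrict (Set.Ioo (0:ℝ) 1))) :=
    Measure.isProbabilityMeasure_map (quantile_aemeasurable μ)
  refine Measure.ext_of_Iic _ _ (fun x => ?_)
  rw [Measure.map_apply_of_aemeasurable (quantile_aemeasurable μ) measurableSet_Iic]
  have hpre : Set.Ioo (0:ℝ) 1 ∩ (quantile μ ⁻¹' Set.Iic x)
      = Set.Ioo (0:ℝ) 1 ∩ Set.Iic (cdfOf μ x) := by
    ext u
    simp only [mem_inter_iff, mem_Ioo, mem_preimage, mem_Iic, and_congr_right_iff]
    intro hu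
    exact quantile_le_iff μ ⟨hu.1, hu.2⟩ x
  rw [Measure.restrict_apply' measurableSet_Ioo, Set.inter_comm, hpre]
  have hF0 : 0 ≤ cdfOf μ x := ENNReal.toReal_nonneg
  have hF1 : cdfOf μ x ≤ 1 := by
    have := prob_le_one (μ := μ) (s := Set.Iic x)
    simpa [cdfOf] using ENNReal.toReal_le_of_le_ofReal one_pos.le (by simpa using this)
  have hμx : μ (Set.Iic x) = ENNReal.ofReal (cdfOf μ x) := by
    rw [cdfOf, ENNReal.ofReal_toReal (measure_ne_top μ _)]
  rw [hμx]
  rcases lt_or_ge (cdfOf μ x) 1 with h1 | h1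
  · have : Set.Ioo (0:ℝ) 1 ∩ Set.Iic (cdfOf μ x) = Set.Ioc 0 (cdfOf μ x) := by
      ext u
      simp only [mem_inter_iff, mem_Ioo, mem_Iic, mem_Ioc]
      constructor
      · rintro ⟨⟨h0, _⟩, h2⟩; exact ⟨h0, h2⟩
      · rintro ⟨h0, h2⟩; exact ⟨⟨h0, lt_of_le_of_lt h2 h1⟩, h2⟩
    rw [this, Real.volume_Ioc, sub_zero]
  · have h1' : cdfOf μ x = 1 := le_antisymm hF1 h1
    have : Set.Ioo (0:ℝ) 1 ∩ Set.Iic (cdfOf μ x) = Set.Ioo (0:ℝ) 1 := by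
      rw [h1']
      exact inter_eq_left.2 (fun u hu => le_of_lt hu.2)
    rw [this, Real.volume_Ioo, h1']
    norm_num

/-- The layer function: `e s x = 1_{s < x} - 1_{s < 0}`. -/
noncomputable def lay (s x : ℝ) : ℝ := (if s < x then 1 else 0) - (if s < 0 then 1 else 0)

lemma lay_eq_indicator (x : ℝ) : (fun s => lay s x)
    = fun s => (Set.Ico (0:ℝ) x).indicator (fun _ => (1:ℝ)) s
      - (Set.Ico x (0:ℝ)).indicator (fun _ => (1:ℝ)) s := by
  ext s
  simp only [lay, Set.indicator_apply, mem_Ico]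
  split_ifs <;> simp_all <;> linarith

lemma lay_integrable (x : ℝ) : Integrable (fun s => lay s x) volume := by
  rw [lay_eq_indicator]
  refine Integrable.sub ?_ ?_ <;>
  · rw [integrable_indicator_iff measurableSet_Ico]
    exact (integrableOn_const_iff).2 (Or.inr (by rw [Real.volume_Ico]; exact ENNReal.ofReal_lt_top))

lemma lay_integral (x : ℝ) : ∫ s, lay s x = x := by
  rw [lay_eq_indicator]
  rw [integral_sub, integral_indicator measurableSet_Ico, integral_indicator measurableSet_Ico]
  · simp only [integral_const, smul_eq_mul, mul_one]
    rw [measureReal_restrict_apply_univ, measureReal_restrict_apply_univ, measureReal_def,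
      measureReal_def, Real.volume_Ico, Real.volume_Ico]
    rcases le_or_gt 0 x with h | h
    · rw [ENNReal.toReal_ofReal (by linarith), ENNReal.ofReal_eq_zero.2 (by linarith)]
      simp
    · rw [ENNReal.ofReal_eq_zero.2 (by linarith), ENNReal.toReal_ofReal (by linarith)]
      simp
  · rw [integrable_indicator_iff measurableSet_Ico]
    exact (integrableOn_const_iff).2 (Or.inr (by rw [Real.volume_Ico]; exact ENNReal.ofReal_lt_top))
  · rw [integrable_indicator_iff measurableSet_Ico]
    exact (integrableOn_const_iff).2 (Or.inr (by rw [Real.volume_Ico]; exact ENNReal.ofReal_lt_top))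

lemma lay_meas : Measurable (fun p : ℝ × ℝ => lay p.1 p.2) := by
  unfold lay
  exact (Measurable.ite (measurableSet_lt measurable_fst measurable_snd) measurable_const
    measurable_const).sub (Measurable.ite (measurableSet_lt measurable_fst measurable_const)
    measurable_const measurable_const)

lemma lay_abs_eq (x : ℝ) : (fun s => |lay s x|)
    = fun s => (Set.Ico (0:ℝ) x).indicator (fun _ => (1:ℝ)) s
      + (Set.Ico x (0:ℝ)).indicator (fun _ => (1:ℝ)) s := by
  ext s
  have := congrFun (lay_eq_indicator x) s
  simp only [Set.indicator_apply, mem_Ico] at this ⊢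
  rw [this]
  split_ifs <;> simp_all <;> linarith

lemma lay_abs_integral (x : ℝ) : ∫ s, |lay s x| = |x| := by
  rw [lay_abs_eq]
  rw [integral_add, integral_indicator measurableSet_Ico, integral_indicator measurableSet_Ico]
  · simp only [integral_const, smul_eq_mul, mul_one]
    rw [measureReal_restrict_apply_univ, measureReal_restrict_apply_univ, measureReal_def,
      measureReal_def, Real.volume_Ico, Real.volume_Ico]
    rcases le_or_gt 0 x with h | h
    · rw [ENNReal.toReal_ofReal (by linarith), ENNReal.ofReal_eq_zero.2 (by linarith),
        abs_of_nonneg h]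
      simp
    · rw [ENNReal.ofReal_eq_zero.2 (by linarith), ENNReal.toReal_ofReal (by linarith),
        abs_of_neg h]
      simp
  · rw [integrable_indicator_iff measurableSet_Ico]
    exact (integrableOn_const_iff).2 (Or.inr (by rw [Real.volume_Ico]; exact ENNReal.ofReal_lt_top))
  · rw [integrable_indicator_iff measurableSet_Ico]
    exact (integrableOn_const_iff).2 (Or.inr (by rw [Real.volume_Ico]; exact ENNReal.ofReal_lt_top))

lemma lay_double_integral (x y : ℝ) :
    ∫ q : ℝ × ℝ, lay q.1 x * lay q.2 y ∂((volume : Measure ℝ).prod volume) = x * y := by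
  simpa [lay_integral] using
    integral_prod_mul (μ := (volume : Measure ℝ)) (ν := (volume : Measure ℝ))
      (fun s => lay s x) (fun s => lay s y)

lemma lay_double_integrable (x y : ℝ) :
    Integrable (fun q : ℝ × ℝ => lay q.1 x * lay q.2 y) ((volume : Measure ℝ).prod volume) :=
  (lay_integrable x).mul_prod (lay_integrable y)

lemma lay_double_norm_integral (x y : ℝ) :
    ∫ q : ℝ × ℝ, ‖lay q.1 x * lay q.2 y‖ ∂((volume : Measure ℝ).prod volume) = |x| * |y| := by
  simp only [norm_mul, Real.norm_eq_abs]
  simpa [lay_abs_integral] using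
    integral_prod_mul (μ := (volume : Measure ℝ)) (ν := (volume : Measure ℝ))
      (fun s => |lay s x|) (fun s => |lay s y|)

lemma coupling_fubini (ρ : Measure (ℝ × ℝ)) [IsProbabilityMeasure ρ]
    (h2 : Integrable (fun p : ℝ × ℝ => |p.1| * |p.2|) ρ) :
    ∫ p, p.1 * p.2 ∂ρ
      = ∫ q : ℝ × ℝ, (∫ p, lay q.1 p.1 * lay q.2 p.2 ∂ρ) ∂((volume : Measure ℝ).prod volume) := by
  have hmeas : Measurable (fun z : (ℝ × ℝ) × (ℝ × ℝ) => lay z.2.1 z.1.1 * lay z.2.2 z.1.2) := by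
    exact (lay_meas.comp (measurable_snd.fst.prodMk measurable_fst.fst)).mul
      (lay_meas.comp (measurable_snd.snd.prodMk measurable_fst.snd))
  have hint : Integrable (fun z : (ℝ × ℝ) × (ℝ × ℝ) => lay z.2.1 z.1.1 * lay z.2.2 z.1.2)
      (ρ.prod ((volume : Measure ℝ).prod volume)) := by
    rw [integrable_prod_iff hmeas.aestronglyMeasurable]
    constructor
    · exact Filter.Eventually.of_forall (fun p => lay_double_integrable p.1 p.2)
    · have : (fun p : ℝ × ℝ => ∫ q : ℝ × ℝ, ‖lay q.1 p.1 * lay q.2 p.2‖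
          ∂((volume : Measure ℝ).prod volume)) = fun p => |p.1| * |p.2| := by
        ext p; exact lay_double_norm_integral p.1 p.2
      rw [this]
      exact h2
  have hswap := integral_integral_swap
    (f := fun (p : ℝ × ℝ) (q : ℝ × ℝ) => lay q.1 p.1 * lay q.2 p.2) hint
  rw [← hswap]
  congr 1
  ext p
  exact (lay_double_integral p.1 p.2).symm

lemma coupling_lay_integral (ρ : Measure (ℝ × ℝ)) [IsProbabilityMeasure ρ] (s t : ℝ) :
    ∫ p, lay s p.1 * lay t p.2 ∂ρ
      = (ρ {p : ℝ × ℝ | s < p.1 ∧ t < p.2}).toReal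
        - (if t < 0 then (1:ℝ) else 0) * (ρ.map Prod.fst (Set.Ioi s)).toReal
        - (if s < 0 then (1:ℝ) else 0) * (ρ.map Prod.snd (Set.Ioi t)).toReal
        + (if s < 0 then (1:ℝ) else 0) * (if t < 0 then (1:ℝ) else 0) := by
  have hA : MeasurableSet {p : ℝ × ℝ | s < p.1 ∧ t < p.2} :=
    ((measurableSet_lt measurable_const measurable_fst).inter
      (measurableSet_lt measurable_const measurable_snd))
  have hB : MeasurableSet {p : ℝ × ℝ | s < p.1} :=
    measurableSet_lt measurable_const measurable_fst
  have hC : MeasurableSet {p : ℝ × ℝ | t < p.2} :=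
    measurableSet_lt measurable_const measurable_snd
  set c1 : ℝ := if s < 0 then (1:ℝ) else 0 with hc1
  set c2 : ℝ := if t < 0 then (1:ℝ) else 0 with hc2
  have hfun : (fun p : ℝ × ℝ => lay s p.1 * lay t p.2)
      = fun p => ({p : ℝ × ℝ | s < p.1 ∧ t < p.2}.indicator (fun _ => (1:ℝ)) p
          - c2 * {p : ℝ × ℝ | s < p.1}.indicator (fun _ => (1:ℝ)) p)
          - (c1 * {p : ℝ × ℝ | t < p.2}.indicator (fun _ => (1:ℝ)) p - c1 * c2) := by
    ext p
    simp only [lay, Set.indicator_apply, mem_setOf_eq, hc1, hc2]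
    split_ifs <;> simp_all <;> ring
  have i1 : Integrable ({p : ℝ × ℝ | s < p.1 ∧ t < p.2}.indicator (fun _ => (1:ℝ))) ρ :=
    (integrable_const (1:ℝ)).indicator hA
  have i2 : Integrable ({p : ℝ × ℝ | s < p.1}.indicator (fun _ => (1:ℝ))) ρ :=
    (integrable_const (1:ℝ)).indicator hB
  have i3 : Integrable ({p : ℝ × ℝ | t < p.2}.indicator (fun _ => (1:ℝ))) ρ :=
    (integrable_const (1:ℝ)).indicator hC
  have I12 : Integrable (fun p : ℝ × ℝ => {p : ℝ × ℝ | s < p.1 ∧ t < p.2}.indicator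
      (fun _ => (1:ℝ)) p - c2 * {p : ℝ × ℝ | s < p.1}.indicator (fun _ => (1:ℝ)) p) ρ :=
    i1.sub (i2.const_mul c2)
  have I34 : Integrable (fun p : ℝ × ℝ => c1 * {p : ℝ × ℝ | t < p.2}.indicator
      (fun _ => (1:ℝ)) p - c1 * c2) ρ := (i3.const_mul c1).sub (integrable_const (c1 * c2))
  rw [hfun, integral_sub I12 I34,
    integral_sub i1 (i2.const_mul c2), integral_sub (i3.const_mul c1) (integrable_const (c1 * c2)),
    integral_const_mul, integral_const_mul, integral_const,
    integral_indicator_const _ hA, integral_indicator_const _ hB, integral_indicator_const _ hC,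
    Measure.map_apply measurable_fst measurableSet_Ioi,
    Measure.map_apply measurable_snd measurableSet_Ioi]
  have h1 : Prod.fst ⁻¹' Set.Ioi s = {p : ℝ × ℝ | s < p.1} := rfl
  have h2 : Prod.snd ⁻¹' Set.Ioi t = {p : ℝ × ℝ | t < p.2} := rfl
  rw [h1, h2]
  simp [measure_univ, measureReal_def]
  ring

lemma coupling_fubini_integrable (ρ : Measure (ℝ × ℝ)) [IsProbabilityMeasure ρ]
    (h2 : Integrable (fun p : ℝ × ℝ => |p.1| * |p.2|) ρ) :
    Integrable (fun q : ℝ × ℝ => ∫ p, lay q.1 p.1 * lay q.2 p.2 ∂ρ)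
      ((volume : Measure ℝ).prod volume) := by
  have hmeas : Measurable (fun z : (ℝ × ℝ) × (ℝ × ℝ) => lay z.2.1 z.1.1 * lay z.2.2 z.1.2) := by
    exact (lay_meas.comp (measurable_snd.fst.prodMk measurable_fst.fst)).mul
      (lay_meas.comp (measurable_snd.snd.prodMk measurable_fst.snd))
  have hint : Integrable (fun z : (ℝ × ℝ) × (ℝ × ℝ) => lay z.2.1 z.1.1 * lay z.2.2 z.1.2)
      (ρ.prod ((volume : Measure ℝ).prod volume)) := by
    rw [integrable_prod_iff hmeas.aestronglyMeasurable]
    constructor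
    · exact Filter.Eventually.of_forall (fun p => lay_double_integrable p.1 p.2)
    · have : (fun p : ℝ × ℝ => ∫ q : ℝ × ℝ, ‖lay q.1 p.1 * lay q.2 p.2‖
          ∂((volume : Measure ℝ).prod volume)) = fun p => |p.1| * |p.2| := by
        ext p; exact lay_double_norm_integral p.1 p.2
      rw [this]
      exact h2
  exact hint.integral_prod_right

lemma coupling_sq_int_fst (ρ : Measure (ℝ × ℝ))
    (h : Integrable (fun x => x ^ 2) (ρ.map Prod.fst)) :
    Integrable (fun p : ℝ × ℝ => p.1 ^ 2) ρ := by
  rwa [integrable_map_measure (by fun_prop) measurable_fst.aemeasurable] at h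

lemma coupling_sq_int_snd (ρ : Measure (ℝ × ℝ))
    (h : Integrable (fun x => x ^ 2) (ρ.map Prod.snd)) :
    Integrable (fun p : ℝ × ℝ => p.2 ^ 2) ρ := by
  rwa [integrable_map_measure (by fun_prop) measurable_snd.aemeasurable] at h

lemma coupling_mul_int (ρ : Measure (ℝ × ℝ))
    (h1 : Integrable (fun x => x ^ 2) (ρ.map Prod.fst))
    (h2 : Integrable (fun x => x ^ 2) (ρ.map Prod.snd)) :
    Integrable (fun p : ℝ × ℝ => p.1 * p.2) ρ := by
  have hs1 := coupling_sq_int_fst ρ h1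
  have hs2 := coupling_sq_int_snd ρ h2
  refine Integrable.mono' (((hs1.add hs2).const_mul (1/2 : ℝ))) (by fun_prop) ?_
  refine Filter.Eventually.of_forall (fun p => ?_)
  rw [Real.norm_eq_abs, abs_mul]
  simp only [Pi.add_apply]
  nlinarith [abs_nonneg p.1, abs_nonneg p.2, sq_abs p.1, sq_abs p.2, sq_nonneg (|p.1| - |p.2|)]

lemma coupling_absmul_int (ρ : Measure (ℝ × ℝ))
    (h1 : Integrable (fun x => x ^ 2) (ρ.map Prod.fst))
    (h2 : Integrable (fun x => x ^ 2) (ρ.map Prod.snd)) :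
    Integrable (fun p : ℝ × ℝ => |p.1| * |p.2|) ρ := by
  have := (coupling_mul_int ρ h1 h2).abs
  simpa [abs_mul] using this

section Como
variable (μ ν : Measure ℝ) [IsProbabilityMeasure μ] [IsProbabilityMeasure ν]

/-- The comonotone coupling. -/
noncomputable def como : Measure (ℝ × ℝ) :=
  Measure.map (fun u => (quantile μ u, quantile ν u)) (volume.restrict (Set.Ioo (0:ℝ) 1))

instance leb01_prob : IsProbabilityMeasure (volume.restrict (Set.Ioo (0:ℝ) 1)) := by
  constructor; simp [Real.volume_Ioo]

lemma como_joint_aemeasurable :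
    AEMeasurable (fun u => (quantile μ u, quantile ν u)) (volume.restrict (Set.Ioo (0:ℝ) 1)) :=
  (quantile_aemeasurable μ).prodMk (quantile_aemeasurable ν)

instance como_prob : IsProbabilityMeasure (como μ ν) :=
  Measure.isProbabilityMeasure_map (como_joint_aemeasurable μ ν)

lemma como_fst : (como μ ν).map Prod.fst = μ := by
  rw [como, AEMeasurable.map_map_of_aemeasurable measurable_fst.aemeasurable
    (como_joint_aemeasurable μ ν)]
  exact quantile_map μ

lemma como_snd : (como μ ν).map Prod.snd = ν := by
  rw [como, AEMeasurable.map_map_of_aemeasurable measurable_snd.aemeasurable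
    (como_joint_aemeasurable μ ν)]
  exact quantile_map ν

lemma measure_Ioi_cdf (s : ℝ) : μ (Set.Ioi s) = ENNReal.ofReal (1 - cdfOf μ s) := by
  have h1 : μ (Set.Ioi s) = 1 - μ (Set.Iic s) := by
    rw [← prob_compl_eq_one_sub measurableSet_Iic, Set.compl_Iic]
  have h2 : (0:ℝ) ≤ cdfOf μ s := ENNReal.toReal_nonneg
  rw [h1, show μ (Set.Iic s) = ENNReal.ofReal (cdfOf μ s) by
      rw [cdfOf, ENNReal.ofReal_toReal (measure_ne_top μ _)],
    ENNReal.ofReal_sub 1 h2, ENNReal.ofReal_one]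

lemma cdfOf_mem_Icc (s : ℝ) : cdfOf μ s ∈ Set.Icc (0:ℝ) 1 := by
  refine ⟨ENNReal.toReal_nonneg, ?_⟩
  have := prob_le_one (μ := μ) (s := Set.Iic s)
  exact ENNReal.toReal_le_of_le_ofReal one_pos.le (by simpa using this)

lemma como_survival (s t : ℝ) :
    como μ ν {p : ℝ × ℝ | s < p.1 ∧ t < p.2} = min (μ (Set.Ioi s)) (ν (Set.Ioi t)) := by
  have hA : MeasurableSet {p : ℝ × ℝ | s < p.1 ∧ t < p.2} :=
    ((measurableSet_lt measurable_const measurable_fst).inter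
      (measurableSet_lt measurable_const measurable_snd))
  rw [como, Measure.map_apply_of_aemeasurable (como_joint_aemeasurable μ ν) hA,
    Measure.restrict_apply' measurableSet_Ioo]
  set c : ℝ := max (cdfOf μ s) (cdfOf ν t) with hc
  have hc0 : 0 ≤ c := le_max_of_le_left (cdfOf_mem_Icc μ s).1
  have hc1 : c ≤ 1 := max_le (cdfOf_mem_Icc μ s).2 (cdfOf_mem_Icc ν t).2
  have hset : (fun u => (quantile μ u, quantile ν u)) ⁻¹' {p : ℝ × ℝ | s < p.1 ∧ t < p.2}
      ∩ Set.Ioo (0:ℝ) 1 = Set.Ioo c 1 := by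
    ext u
    simp only [mem_inter_iff, mem_preimage, mem_setOf_eq, mem_Ioo]
    constructor
    · rintro ⟨⟨h1, h2⟩, hu⟩
      have hm : cdfOf μ s < u :=
        lt_of_not_ge fun hle => absurd ((quantile_le_iff μ hu s).2 hle) (not_le.2 h1)
      have hn : cdfOf ν t < u :=
        lt_of_not_ge fun hle => absurd ((quantile_le_iff ν hu t).2 hle) (not_le.2 h2)
      exact ⟨max_lt hm hn, hu.2⟩
    · rintro ⟨h1, h2⟩
      have hu : u ∈ Set.Ioo (0:ℝ) 1 := ⟨lt_of_le_of_lt hc0 h1, h2⟩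
      refine ⟨⟨?_, ?_⟩, hu⟩
      · by_contra h
        exact absurd ((quantile_le_iff μ hu s).1 (le_of_not_gt h))
          (not_le.2 (lt_of_le_of_lt (le_max_left _ _) h1))
      · by_contra h
        exact absurd ((quantile_le_iff ν hu t).1 (le_of_not_gt h))
          (not_le.2 (lt_of_le_of_lt (le_max_right _ _) h1))
  rw [hset, Real.volume_Ioo, measure_Ioi_cdf, measure_Ioi_cdf]
  rcases max_cases (cdfOf μ s) (cdfOf ν t) with ⟨he, hle⟩ | ⟨he, hlt⟩
  · rw [hc, he, min_eq_left (ENNReal.ofReal_le_ofReal (by linarith))]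
  · rw [hc, he, min_eq_right (ENNReal.ofReal_le_ofReal (by linarith))]

end Como

lemma cross_term_le (μ ν : Measure ℝ) [IsProbabilityMeasure μ] [IsProbabilityMeasure ν]
    (hμ2 : Integrable (fun x => x ^ 2) μ) (hν2 : Integrable (fun x => x ^ 2) ν)
    (π : Measure (ℝ × ℝ)) [IsProbabilityMeasure π]
    (hfst : π.map Prod.fst = μ) (hsnd : π.map Prod.snd = ν) :
    ∫ p, p.1 * p.2 ∂π ≤ ∫ p, p.1 * p.2 ∂(como μ ν) := by
  have hm1 : Integrable (fun x => x ^ 2) (π.map Prod.fst) := by rw [hfst]; exact hμ2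
  have hm2 : Integrable (fun x => x ^ 2) (π.map Prod.snd) := by rw [hsnd]; exact hν2
  have hm1' : Integrable (fun x => x ^ 2) ((como μ ν).map Prod.fst) := by
    rw [como_fst]; exact hμ2
  have hm2' : Integrable (fun x => x ^ 2) ((como μ ν).map Prod.snd) := by
    rw [como_snd]; exact hν2
  have habs1 := coupling_absmul_int π hm1 hm2
  have habs2 := coupling_absmul_int (como μ ν) hm1' hm2'
  rw [coupling_fubini π habs1, coupling_fubini (como μ ν) habs2]
  refine integral_mono (coupling_fubini_integrable π habs1)
    (coupling_fubini_integrable _ habs2) (fun q => ?_)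
  rw [coupling_lay_integral, coupling_lay_integral, hfst, hsnd, como_fst, como_snd]
  have hAle : π {p : ℝ × ℝ | q.1 < p.1 ∧ q.2 < p.2}
      ≤ como μ ν {p : ℝ × ℝ | q.1 < p.1 ∧ q.2 < p.2} := by
    rw [como_survival]
    refine le_min ?_ ?_
    · calc π {p : ℝ × ℝ | q.1 < p.1 ∧ q.2 < p.2} ≤ π (Prod.fst ⁻¹' Set.Ioi q.1) :=
        measure_mono (fun p hp => hp.1)
      _ = μ (Set.Ioi q.1) := by rw [← Measure.map_apply measurable_fst measurableSet_Ioi, hfst]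
    · calc π {p : ℝ × ℝ | q.1 < p.1 ∧ q.2 < p.2} ≤ π (Prod.snd ⁻¹' Set.Ioi q.2) :=
        measure_mono (fun p hp => hp.2)
      _ = ν (Set.Ioi q.2) := by rw [← Measure.map_apply measurable_snd measurableSet_Ioi, hsnd]
  have := ENNReal.toReal_mono (measure_ne_top (como μ ν) _) hAle
  linarith

lemma coupling_sq_expand (μ ν : Measure ℝ)
    (hμ2 : Integrable (fun x => x ^ 2) μ) (hν2 : Integrable (fun x => x ^ 2) ν)
    (ρ : Measure (ℝ × ℝ)) [IsProbabilityMeasure ρ]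
    (h1 : ρ.map Prod.fst = μ) (h2 : ρ.map Prod.snd = ν) :
    ∫ p, (p.1 - p.2) ^ 2 ∂ρ
      = (∫ x, x ^ 2 ∂μ) + (∫ x, x ^ 2 ∂ν) - 2 * ∫ p, p.1 * p.2 ∂ρ := by
  have hm1 : Integrable (fun x => x ^ 2) (ρ.map Prod.fst) := by rw [h1]; exact hμ2
  have hm2 : Integrable (fun x => x ^ 2) (ρ.map Prod.snd) := by rw [h2]; exact hν2
  have i1 := coupling_sq_int_fst ρ hm1
  have i2 := coupling_sq_int_snd ρ hm2
  have i3 := coupling_mul_int ρ hm1 hm2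
  have i12 : Integrable (fun p : ℝ × ℝ => p.1 ^ 2 + p.2 ^ 2) ρ := i1.add i2
  have i3' : Integrable (fun p : ℝ × ℝ => 2 * (p.1 * p.2)) ρ := i3.const_mul 2
  have hrw : (fun p : ℝ × ℝ => (p.1 - p.2) ^ 2)
      = fun p : ℝ × ℝ => (p.1 ^ 2 + p.2 ^ 2) - 2 * (p.1 * p.2) := by ext p; ring
  rw [hrw, integral_sub i12 i3', integral_add i1 i2, integral_const_mul]
  have m1 : ∫ p : ℝ × ℝ, p.1 ^ 2 ∂ρ = ∫ x, x ^ 2 ∂μ := by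
    rw [← h1, integral_map measurable_fst.aemeasurable (by fun_prop)]
  have m2 : ∫ p : ℝ × ℝ, p.2 ^ 2 ∂ρ = ∫ x, x ^ 2 ∂ν := by
    rw [← h2, integral_map measurable_snd.aemeasurable (by fun_prop)]
  rw [m1, m2]


theorem comonotone_coupling_lower_bound (μ ν : Measure ℝ)
    (hμ : IsProbabilityMeasure μ) (hν : IsProbabilityMeasure ν)
    (hμ2 : Integrable (fun x => x ^ 2) μ) (hν2 : Integrable (fun x => x ^ 2) ν)
    (π : Measure (ℝ × ℝ)) (hπ : IsProbabilityMeasure π)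
    (hfst : π.map Prod.fst = μ) (hsnd : π.map Prod.snd = ν) :
    ∫ u in Set.Ioo (0 : ℝ) 1, (quantile μ u - quantile ν u) ^ 2
      ≤ ∫ p, (p.1 - p.2) ^ 2 ∂π := by
  haveI := hμ; haveI := hν; haveI := hπ
  have hL : ∫ u in Set.Ioo (0 : ℝ) 1, (quantile μ u - quantile ν u) ^ 2
      = ∫ p, (p.1 - p.2) ^ 2 ∂(como μ ν) := by
    rw [como, integral_map (como_joint_aemeasurable μ ν)
      (by fun_prop : Measurable fun p : ℝ × ℝ => (p.1 - p.2) ^ 2).aestronglyMeasurable]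
  rw [hL, coupling_sq_expand μ ν hμ2 hν2 π hfst hsnd,
    coupling_sq_expand μ ν hμ2 hν2 (como μ ν) (como_fst μ ν) (como_snd μ ν)]
  have := cross_term_le μ ν hμ2 hν2 π hfst hsnd
  linarith
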